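/- Let α ∈ (−1/2, 1/2) and let 0 ≤ v < s be real numbers. For integers n ≥ 1 define B_n(v,s) = n^{2α+1} ∫_{⌊nv⌋/n}^{v} |(s − u)^α − (⌊ns⌋/n − u)^α| (v − u)^α du, where ⌊·⌋ denotes the floor function. Then B_n(v,s) → 0 as n → ∞. -/

import Mathlib

open MeasureTheory Set

/-- The quantity `B_n(v,s)` from Lemma A.3 of the paper. -/
noncomputable def B (α : ℝ) (n : ℕ) (v s : ℝ) : ℝ :=
  (n : ℝ) ^ (2*α + 1) *
    ∫ u in Set.Ioc ((⌊(n:ℝ) * v⌋ : ℝ) / n) v,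
      |(s - u) ^ α - ((⌊(n:ℝ) * s⌋ : ℝ) / n - u) ^ α| * (v - u) ^ α

/-- Lemma A.3 of the paper. -/
theorem stmt_10 (α v s : ℝ) (hα : α ∈ Set.Ioo (-(1:ℝ)/2) (1/2))
    (hv : 0 ≤ v) (hvs : v < s) :
    Filter.Tendsto (fun n : ℕ => B α n v s) Filter.atTop (nhds 0) := by
  obtain ⟨hα1, hα2⟩ := hα
  have hc0 : 0 < s - v := by linarith
  set m : ℝ := (s - v) / 2 with hm
  have hm0 : 0 < m := by positivity
  set L : ℝ := |α| * m ^ (α - 1) with hLdef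
  have hL0 : 0 ≤ L := by positivity
  have hα1p : (0:ℝ) < α + 1 := by linarith
  -- Lipschitz estimate for `x ↦ x ^ α` on `[m, ∞)`
  have lip : ∀ x y : ℝ, m ≤ x → m ≤ y → |x ^ α - y ^ α| ≤ L * |x - y| := by
    intro x y hx hy
    have hder : ∀ t ∈ Set.Ici m, HasDerivWithinAt (fun t : ℝ => t ^ α)
        (α * t ^ (α - 1)) (Set.Ici m) t := by
      intro t ht
      exact (Real.hasDerivAt_rpow_const
        (Or.inl (ne_of_gt (lt_of_lt_of_le hm0 ht)))).hasDerivWithinAt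
    have hbd : ∀ t ∈ Set.Ici m, ‖α * t ^ (α - 1)‖ ≤ L := by
      intro t ht
      rw [Real.norm_eq_abs, abs_mul, hLdef]
      rw [abs_of_nonneg (Real.rpow_nonneg (le_of_lt (lt_of_lt_of_le hm0 ht)) _)]
      exact mul_le_mul_of_nonneg_left
        (Real.rpow_le_rpow_of_nonpos hm0 ht (by linarith)) (abs_nonneg α)
    have h := Convex.norm_image_sub_le_of_norm_hasDerivWithin_le hder hbd
      (convex_Ici m) hy hx
    simpa [Real.norm_eq_abs] using h
  -- the eventual bound
  have key : ∀ᶠ n : ℕ in Filter.atTop,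
      ‖B α n v s‖ ≤ (L / (α + 1)) * (n:ℝ) ^ (α - 1) := by
    filter_upwards [Filter.eventually_ge_atTop (max 1 ⌈2/(s - v)⌉₊)] with n hn
    have hn1 : 1 ≤ n := le_trans (le_max_left _ _) hn
    have hn2 : 2/(s - v) ≤ (n:ℝ) :=
      le_trans (Nat.le_ceil _) (Nat.cast_le.2 (le_trans (le_max_right _ _) hn))
    have hn0 : (0:ℝ) < n := by exact_mod_cast hn1
    have h1n : 1/(n:ℝ) ≤ m := by
      rw [div_le_iff₀ hn0]
      have hme : m * (2/(s-v)) = 1 := by rw [hm]; field_simp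
      nlinarith [mul_le_mul_of_nonneg_left hn2 hm0.le]
    set a : ℝ := (⌊(n:ℝ) * v⌋ : ℝ) / n with hadef
    set b : ℝ := (⌊(n:ℝ) * s⌋ : ℝ) / n with hbdef
    have hav : a ≤ v := by
      rw [hadef, div_le_iff₀ hn0]
      have := Int.floor_le ((n:ℝ) * v)
      linarith [this, mul_comm (n:ℝ) v]
    have hva : v - a ≤ 1/n := by
      have h1 := Int.lt_floor_add_one ((n:ℝ) * v)
      rw [hadef, sub_le_iff_le_add, ← add_div, le_div_iff₀ hn0]
      nlinarith
    have hbs : b ≤ s := by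
      rw [hbdef, div_le_iff₀ hn0]
      have := Int.floor_le ((n:ℝ) * s)
      linarith [this, mul_comm (n:ℝ) s]
    have hsb : s - b ≤ 1/n := by
      have h1 := Int.lt_floor_add_one ((n:ℝ) * s)
      rw [hbdef, sub_le_iff_le_add, ← add_div, le_div_iff₀ hn0]
      nlinarith
    have hsb0 : 0 ≤ s - b := by linarith
    -- integrability of the dominating function
    have hig : IntervalIntegrable (fun u => (v - u) ^ α) volume a v := by
      have h0 : IntervalIntegrable (fun t : ℝ => t ^ α) volume (v - a) 0 :=
        (intervalIntegral.intervalIntegrable_rpow' (by linarith)).symm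
      simpa using h0.comp_sub_left v
    -- the norm bound on the integral
    have hbound :
        ‖∫ u in Set.Ioc a v, |(s - u) ^ α - (b - u) ^ α| * (v - u) ^ α‖ ≤
          ∫ u in Set.Ioc a v, (L / (n:ℝ)) * (v - u) ^ α := by
      apply MeasureTheory.norm_integral_le_of_norm_le (hig.1.const_mul _)
      filter_upwards [MeasureTheory.ae_restrict_mem measurableSet_Ioc] with u hu
      have huv : u ≤ v := hu.2
      have hus : m ≤ s - u := by linarith [hm]
      have hub : m ≤ b - u := by
        have : s - v = 2 * m := by rw [hm]; ring
        linarith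
      have h1 : |(s - u) ^ α - (b - u) ^ α| ≤ L * (s - b) := by
        have h := lip (s - u) (b - u) hus hub
        rwa [show (s - u) - (b - u) = s - b by ring, abs_of_nonneg hsb0] at h
      rw [Real.norm_eq_abs, abs_mul, abs_abs,
        abs_of_nonneg (Real.rpow_nonneg (by linarith) α)]
      have h2 : L * (s - b) ≤ L / n := by
        rw [div_eq_mul_one_div]
        exact mul_le_mul_of_nonneg_left hsb hL0
      exact mul_le_mul_of_nonneg_right (le_trans h1 h2)
        (Real.rpow_nonneg (by linarith) α)
    -- value of the dominating integral
    have hval : ∫ u in Set.Ioc a v, (L / (n:ℝ)) * (v - u) ^ α =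
        (L / n) * ((v - a) ^ (α + 1) / (α + 1)) := by
      rw [MeasureTheory.integral_const_mul, ← intervalIntegral.integral_of_le hav,
        intervalIntegral.integral_comp_sub_left (fun t : ℝ => t ^ α) v, sub_self,
        integral_rpow (Or.inl (by linarith : (-1:ℝ) < α)),
        Real.zero_rpow (by linarith : α + 1 ≠ 0)]
      ring
    -- power arithmetic
    have hpow : (n:ℝ) ^ (2*α + 1) * (1/(n:ℝ)) * ((1/(n:ℝ)) ^ (α + 1)) =
        (n:ℝ) ^ (α - 1) := by
      rw [one_div, ← Real.rpow_neg_one (n:ℝ), ← Real.rpow_mul hn0.le,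
        ← Real.rpow_add hn0, ← Real.rpow_add hn0]
      congr 1; ring
    have hBeq : B α n v s = (n:ℝ) ^ (2*α + 1) *
        ∫ u in Set.Ioc a v, |(s - u) ^ α - (b - u) ^ α| * (v - u) ^ α := rfl
    have hnn : (0:ℝ) ≤ (n:ℝ) ^ (2*α + 1) := Real.rpow_nonneg (Nat.cast_nonneg n) _
    calc ‖B α n v s‖
        = (n:ℝ) ^ (2*α + 1) *
            ‖∫ u in Set.Ioc a v, |(s - u) ^ α - (b - u) ^ α| * (v - u) ^ α‖ := by
          rw [hBeq, norm_mul, Real.norm_eq_abs ((n:ℝ) ^ (2*α + 1)),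
            abs_of_nonneg hnn]
      _ ≤ (n:ℝ) ^ (2*α + 1) * ((L / n) * ((v - a) ^ (α + 1) / (α + 1))) :=
          mul_le_mul_of_nonneg_left (hval ▸ hbound) hnn
      _ ≤ (n:ℝ) ^ (2*α + 1) * ((L / n) * ((1/(n:ℝ)) ^ (α + 1) / (α + 1))) := by
          have hmon : (v - a) ^ (α + 1) ≤ (1/(n:ℝ)) ^ (α + 1) :=
            Real.rpow_le_rpow (by linarith) hva (by linarith)
          have : (0:ℝ) ≤ L / n := div_nonneg hL0 hn0.le
          gcongr
      _ = (L / (α + 1)) * (n:ℝ) ^ (α - 1) := by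
          rw [← hpow]; ring
  -- conclusion by squeezing
  have hlim : Filter.Tendsto (fun n : ℕ => (L / (α + 1)) * (n:ℝ) ^ (α - 1))
      Filter.atTop (nhds 0) := by
    rw [show (0:ℝ) = (L / (α + 1)) * 0 by ring]
    apply Filter.Tendsto.const_mul
    have h := (tendsto_rpow_neg_atTop (by linarith : (0:ℝ) < 1 - α)).comp
      tendsto_natCast_atTop_atTop
    simpa [Function.comp_def, neg_sub] using h
  exact squeeze_zero_norm' key hlim
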